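/- Let f(X) = X^n + a_1 X^{n-1} + ... + a_n be a monic polynomial with complex coefficients of degree n ≥ 2, and let R be the maximal modulus among its roots. If f has at least two roots (counted with multiplicity) of modulus R, then |a_1| ≤ n·(n+1)^{1/4}·H(f)^{1/2}, where H(f) = max_{1≤j≤n} max{1, |a_j|} is the height of f. -/

import Mathlib

open Polynomial Finset Complex

private lemma swap_root_sum (m : ℕ) (a : ℂ) (h : ℂ[X]) (hh : ∀ k, m ≤ k → h.coeff k = 0) :
    ∑ k ∈ range (m + 1), Complex.normSq (((X - C a) * h).coeff k)
      = ∑ k ∈ range (m + 1), Complex.normSq (((C (starRingEnd ℂ a) * X - 1) * h).coeff k) := by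
  have e1 : ∀ k, ((X - C a) * h).coeff k = (X * h).coeff k - a * h.coeff k := by
    intro k; simp [sub_mul, coeff_C_mul]
  have e2 : ∀ k, ((C (starRingEnd ℂ a) * X - 1) * h).coeff k
      = (starRingEnd ℂ a) * (X * h).coeff k - h.coeff k := by
    intro k; simp [sub_mul, coeff_C_mul, mul_assoc]
  have shift : ∑ k ∈ range (m + 1), Complex.normSq ((X * h).coeff k)
      = ∑ k ∈ range (m + 1), Complex.normSq (h.coeff k) := by
    rw [Finset.sum_range_succ']
    rw [Finset.sum_range_succ (fun k => Complex.normSq (h.coeff k)) m]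
    simp [Polynomial.coeff_X_mul, Polynomial.mul_coeff_zero, hh m le_rfl]
  have pt : ∀ v u : ℂ, Complex.normSq (v - a * u) - Complex.normSq (starRingEnd ℂ a * v - u)
      = (1 - Complex.normSq a) * (Complex.normSq v - Complex.normSq u) := by
    intro v u
    simp only [Complex.normSq_apply, Complex.sub_re, Complex.sub_im, Complex.mul_re,
      Complex.mul_im, Complex.conj_re, Complex.conj_im]
    ring
  have key : ∑ k ∈ range (m + 1), (Complex.normSq (((X - C a) * h).coeff k)
      - Complex.normSq (((C (starRingEnd ℂ a) * X - 1) * h).coeff k)) = 0 := by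
    calc ∑ k ∈ range (m + 1), (Complex.normSq (((X - C a) * h).coeff k)
        - Complex.normSq (((C (starRingEnd ℂ a) * X - 1) * h).coeff k))
        = ∑ k ∈ range (m + 1),
            (1 - Complex.normSq a) * (Complex.normSq ((X * h).coeff k) - Complex.normSq (h.coeff k)) := by
          refine Finset.sum_congr rfl fun k _ => ?_
          rw [e1, e2, pt]
      _ = (1 - Complex.normSq a) * ∑ k ∈ range (m + 1),
            (Complex.normSq ((X * h).coeff k) - Complex.normSq (h.coeff k)) := by
          rw [Finset.mul_sum]
      _ = 0 := by rw [Finset.sum_sub_distrib, shift, sub_self, mul_zero]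
  rw [Finset.sum_sub_distrib] at key
  linarith [key]

set_option maxHeartbeats 1000000 in
theorem two_max_roots_coeff_bound (n : ℕ) (hn : 2 ≤ n) (α : Fin n → ℂ)
    (f : Polynomial ℂ) (hf : f = ∏ i, (Polynomial.X - Polynomial.C (α i)))
    (hmax : ∀ i, ‖α i‖ ≤ ‖α ⟨0, by omega⟩‖)
    (htwo : ‖α ⟨1, by omega⟩‖ = ‖α ⟨0, by omega⟩‖) :
    ‖f.coeff (n - 1)‖ ≤
      (n : ℝ) * ((n : ℝ) + 1) ^ ((1 : ℝ) / 4) *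
        (((Finset.range (n + 1)).sup' (Finset.nonempty_range_iff.2 (Nat.succ_ne_zero n))
          fun j => max 1 ‖f.coeff j‖) ^ ((1 : ℝ) / 2)) := by
  have i0 : Fin n := ⟨0, by omega⟩
  have i1 : Fin n := ⟨1, by omega⟩
  set R : ℝ := ‖α ⟨0, by omega⟩‖ with hR
  set H : ℝ := ((Finset.range (n + 1)).sup' (Finset.nonempty_range_iff.2 (Nat.succ_ne_zero n))
      fun j => max 1 ‖f.coeff j‖) with hH
  have hH1 : (1 : ℝ) ≤ H := by
    have h0 : (0 : ℕ) ∈ Finset.range (n + 1) := by simp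
    have := Finset.le_sup' (fun j => max 1 ‖f.coeff j‖) h0
    exact le_trans (le_max_left _ _) this
  have hHc : ∀ k, k ∈ Finset.range (n + 1) → ‖f.coeff k‖ ≤ H := by
    intro k hk
    have := Finset.le_sup' (fun j => max 1 ‖f.coeff j‖) hk
    exact le_trans (le_max_right _ _) this
  have hH0 : (0 : ℝ) ≤ H := le_trans zero_le_one hH1
  -- Step A : |coeff (n-1)| ≤ n * R
  have hcoeff : f.coeff (n - 1) = -∑ i, α i := by
    have := Polynomial.prod_X_sub_C_coeff_card_pred (Finset.univ : Finset (Fin n)) α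
      (by simp; omega)
    simpa [hf] using this
  have hstepA : ‖f.coeff (n - 1)‖ ≤ n * R := by
    rw [hcoeff, norm_neg]
    calc ‖∑ i, α i‖ ≤ ∑ i, ‖α i‖ := norm_sum_le _ _
      _ ≤ ∑ _i : Fin n, R := Finset.sum_le_sum fun i _ => hmax i
      _ = n * R := by simp [mul_comm]
  -- Step B : R^4 ≤ (n+1) * H^2
  have hR0 : 0 ≤ R := norm_nonneg _
  have hstepB : R ^ 4 ≤ ((n : ℝ) + 1) * H ^ 2 := by
    rcases eq_or_lt_of_le hR0 with h0 | hRpos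
    · rw [← h0]
      have : (0:ℝ) ^ 4 = 0 := by norm_num
      rw [this]; positivity
    · -- split off the two big roots
      set β : ℂ := α ⟨0, by omega⟩ with hβdef
      set γ : ℂ := α ⟨1, by omega⟩ with hγdef
      have hne : (⟨0, by omega⟩ : Fin n) ≠ ⟨1, by omega⟩ := by simp [Fin.ext_iff]
      set s : Finset (Fin n) := (Finset.univ.erase ⟨0, by omega⟩).erase ⟨1, by omega⟩ with hs
      set g : ℂ[X] := ∏ i ∈ s, (X - C (α i)) with hg
      have hgdeg : g.natDegree = n - 2 := by
        rw [hg, Polynomial.natDegree_prod _ _ (fun i _ => X_sub_C_ne_zero (α i))]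
        simp only [Polynomial.natDegree_X_sub_C, Finset.sum_const, smul_eq_mul, mul_one]
        rw [hs, Finset.card_erase_of_mem (Finset.mem_erase.2 ⟨hne.symm, Finset.mem_univ _⟩),
          Finset.card_erase_of_mem (Finset.mem_univ _)]
        simp only [Finset.card_univ, Fintype.card_fin]
        omega
      have hgmonic : g.Monic := monic_prod_of_monic _ _ fun i _ => monic_X_sub_C (α i)
      have hfsplit : f = (X - C β) * ((X - C γ) * g) := by
        rw [hf, hg, hs, ← Finset.mul_prod_erase _ _ (Finset.mem_univ (⟨0, by omega⟩ : Fin n)),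
          ← Finset.mul_prod_erase _ _ (Finset.mem_erase.2 ⟨hne.symm, Finset.mem_univ _⟩)]
      have hβ0 : β ≠ 0 := by
        intro h; rw [h, norm_zero] at hR; exact hRpos.ne' (hR ▸ rfl)
      have hγ0 : γ ≠ 0 := by
        intro h; rw [h, norm_zero] at htwo; exact hRpos.ne' htwo.symm
      -- degree bounds for the swap lemma
      have hlin1 : (C (starRingEnd ℂ β) * X - 1 : ℂ[X]).natDegree ≤ 1 := by
        have : (C (starRingEnd ℂ β) * X - 1 : ℂ[X]) = C (starRingEnd ℂ β) * X + C (-1) := by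
          simp [sub_eq_add_neg]
        rw [this]; exact Polynomial.natDegree_linear_le
      have h1 : ∀ k, n ≤ k → ((X - C γ) * g).coeff k = 0 := by
        intro k hk
        apply Polynomial.coeff_eq_zero_of_natDegree_lt
        refine lt_of_lt_of_le ?_ hk
        calc ((X - C γ) * g).natDegree ≤ (X - C γ).natDegree + g.natDegree :=
            Polynomial.natDegree_mul_le
          _ = 1 + (n - 2) := by rw [Polynomial.natDegree_X_sub_C, hgdeg]
          _ < n := by omega
      have h2 : ∀ k, n ≤ k → ((C (starRingEnd ℂ β) * X - 1) * g).coeff k = 0 := by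
        intro k hk
        apply Polynomial.coeff_eq_zero_of_natDegree_lt
        refine lt_of_lt_of_le ?_ hk
        calc ((C (starRingEnd ℂ β) * X - 1) * g).natDegree
            ≤ (C (starRingEnd ℂ β) * X - 1).natDegree + g.natDegree :=
            Polynomial.natDegree_mul_le
          _ ≤ 1 + (n - 2) := by rw [hgdeg]; exact Nat.add_le_add_right hlin1 _
          _ < n := by omega
      -- the two swaps preserve the coefficient sum
      set p : ℂ[X] := (C (starRingEnd ℂ γ) * X - 1) * ((C (starRingEnd ℂ β) * X - 1) * g) with hp
      have hsum : ∑ k ∈ range (n + 1), Complex.normSq (f.coeff k)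
          = ∑ k ∈ range (n + 1), Complex.normSq (p.coeff k) := by
        calc ∑ k ∈ range (n + 1), Complex.normSq (f.coeff k)
            = ∑ k ∈ range (n + 1), Complex.normSq (((X - C β) * ((X - C γ) * g)).coeff k) := by
              rw [hfsplit]
          _ = ∑ k ∈ range (n + 1),
              Complex.normSq (((C (starRingEnd ℂ β) * X - 1) * ((X - C γ) * g)).coeff k) :=
            swap_root_sum n β _ h1
          _ = ∑ k ∈ range (n + 1),
              Complex.normSq (((X - C γ) * ((C (starRingEnd ℂ β) * X - 1) * g)).coeff k) := by
              rw [show (C (starRingEnd ℂ β) * X - 1) * ((X - C γ) * g)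
                = (X - C γ) * ((C (starRingEnd ℂ β) * X - 1) * g) by ring]
          _ = ∑ k ∈ range (n + 1), Complex.normSq (p.coeff k) :=
            by rw [hp]; exact swap_root_sum n γ _ h2
      -- the top coefficient of p
      set q : ℂ[X] := (C (starRingEnd ℂ γ) * X - 1) * (C (starRingEnd ℂ β) * X - 1) with hqdef
      have hq2 : q.coeff 2 = starRingEnd ℂ γ * starRingEnd ℂ β := by
        have hexp : q = C (starRingEnd ℂ γ * starRingEnd ℂ β) * X ^ 2
            - C (starRingEnd ℂ γ) * X - C (starRingEnd ℂ β) * X + 1 := by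
          rw [hqdef, map_mul]; ring
        rw [hexp]
        simp only [coeff_add, coeff_sub, coeff_C_mul, coeff_X_pow, coeff_X, coeff_one]
        norm_num
      have hq2ne : q.coeff 2 ≠ 0 := by
        rw [hq2]
        exact mul_ne_zero (by simpa using hγ0) (by simpa using hβ0)
      have hlin2 : (C (starRingEnd ℂ γ) * X - 1 : ℂ[X]).natDegree ≤ 1 := by
        have : (C (starRingEnd ℂ γ) * X - 1 : ℂ[X]) = C (starRingEnd ℂ γ) * X + C (-1) := by
          simp [sub_eq_add_neg]
        rw [this]; exact Polynomial.natDegree_linear_le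
      have hqdeg : q.natDegree = 2 := by
        refine le_antisymm ?_ (Polynomial.le_natDegree_of_ne_zero hq2ne)
        calc q.natDegree ≤ (C (starRingEnd ℂ γ) * X - 1).natDegree
            + (C (starRingEnd ℂ β) * X - 1).natDegree := Polynomial.natDegree_mul_le
          _ ≤ 1 + 1 := add_le_add hlin2 hlin1
          _ = 2 := rfl
      have hplead : p.coeff n = starRingEnd ℂ γ * starRingEnd ℂ β := by
        have hpq : p = q * g := by rw [hp, hqdef, mul_assoc]
        have : (q * g).coeff (q.natDegree + g.natDegree) = q.leadingCoeff * g.leadingCoeff :=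
          Polynomial.coeff_mul_degree_add_degree q g
        rw [hqdeg, hgdeg] at this
        have hn2 : 2 + (n - 2) = n := by omega
        rw [hn2] at this
        rw [hpq, this, hgmonic.leadingCoeff, mul_one, Polynomial.leadingCoeff, hqdeg, hq2]
      have hR4 : Complex.normSq (p.coeff n) = R ^ 4 := by
        rw [hplead, Complex.normSq_mul, Complex.normSq_conj, Complex.normSq_conj,
          Complex.normSq_eq_norm_sq, Complex.normSq_eq_norm_sq, htwo, ← hR]
        ring
      have hsingle : R ^ 4 ≤ ∑ k ∈ range (n + 1), Complex.normSq (p.coeff k) := by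
        rw [← hR4]
        exact Finset.single_le_sum (fun i _ => Complex.normSq_nonneg _)
          (Finset.self_mem_range_succ n)
      have hsumH : ∑ k ∈ range (n + 1), Complex.normSq (f.coeff k) ≤ ((n : ℝ) + 1) * H ^ 2 := by
        calc ∑ k ∈ range (n + 1), Complex.normSq (f.coeff k)
            ≤ ∑ _k ∈ range (n + 1), H ^ 2 := by
              refine Finset.sum_le_sum fun k hk => ?_
              have h1 := hHc k hk
              have h2 : Complex.normSq (f.coeff k) = ‖f.coeff k‖ ^ 2 :=
                (Complex.sq_norm _).symm
              nlinarith [norm_nonneg (f.coeff k)]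
          _ = ((n : ℝ) + 1) * H ^ 2 := by
              rw [Finset.sum_const, Finset.card_range, nsmul_eq_mul]
              push_cast; ring
      calc R ^ 4 ≤ ∑ k ∈ range (n + 1), Complex.normSq (p.coeff k) := hsingle
        _ = ∑ k ∈ range (n + 1), Complex.normSq (f.coeff k) := hsum.symm
        _ ≤ ((n : ℝ) + 1) * H ^ 2 := hsumH
  -- combine
  have hc0 : (0 : ℝ) ≤ ((n : ℝ) + 1) ^ ((1 : ℝ) / 4) * H ^ ((1 : ℝ) / 2) := by positivity
  have hc4 : (((n : ℝ) + 1) ^ ((1 : ℝ) / 4) * H ^ ((1 : ℝ) / 2)) ^ 4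
      = ((n : ℝ) + 1) * H ^ 2 := by
    rw [mul_pow, ← Real.rpow_natCast (((n : ℝ) + 1) ^ ((1 : ℝ) / 4)) 4,
      ← Real.rpow_natCast (H ^ ((1 : ℝ) / 2)) 4,
      ← Real.rpow_mul (by positivity : (0:ℝ) ≤ (n : ℝ) + 1), ← Real.rpow_mul hH0]
    norm_num
  have hRc : R ≤ ((n : ℝ) + 1) ^ ((1 : ℝ) / 4) * H ^ ((1 : ℝ) / 2) := by
    have h4 : R ^ 4 ≤ (((n : ℝ) + 1) ^ ((1 : ℝ) / 4) * H ^ ((1 : ℝ) / 2)) ^ 4 := by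
      rw [hc4]; exact hstepB
    exact le_of_pow_le_pow_left₀ (by norm_num) hc0 h4
  calc ‖f.coeff (n - 1)‖ ≤ n * R := hstepA
    _ ≤ (n : ℝ) * (((n : ℝ) + 1) ^ ((1 : ℝ) / 4) * H ^ ((1 : ℝ) / 2)) := by
        have : (0:ℝ) ≤ (n:ℝ) := Nat.cast_nonneg n
        exact mul_le_mul_of_nonneg_left hRc this
    _ = (n : ℝ) * ((n : ℝ) + 1) ^ ((1 : ℝ) / 4) * (H ^ ((1 : ℝ) / 2)) := by ring
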